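/- Let m ≥ 1, σ ∈ (0,2), Y > 0, T > 0. Let w : [0,Y] × [0,T] → [0,∞), set u(t) = w(0,t)^{1/m}, and assume: u is twice differentiable on [0,T] with |u''| ≤ M; there are a function d : [0,T] → ℝ and a constant K ≥ 0 such that |ν_σ (w(y,t) − w(0,t))/y^σ − d(t)| ≤ K y^{2−σ} for all y ∈ (0,Y] and t ∈ [0,T]; and u'(t) = d(t) for all t ∈ [0,T]. Then there exists C > 0 (depending only on K and M) such that for all Δx ∈ (0,Y], Δt > 0 and t ∈ [0,T] with t + Δt ≤ T: | ν_σ (Δt/Δx^σ)(w(Δx,t) − w(0,t)) + u(t) − u(t+Δt) | ≤ C Δt (Δt + Δx^{2−σ}). -/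

import Mathlib

/-- `ν_σ = σ μ_σ` with `μ_σ = 2^{σ-1} Γ(σ/2) / Γ(1-σ/2)`. -/
noncomputable def nuSigma (σ : ℝ) : ℝ :=
  σ * (2 ^ (σ - 1) * Real.Gamma (σ / 2) / Real.Gamma (1 - σ / 2))

/-- Boundary-node local truncation error (Theorem 4.2): if
`u(t) = w(0,t)^{1/m}` is twice differentiable with `|u''| ≤ M`, the two-point quotient
`ν_σ (w(y,t)-w(0,t))/y^σ` approximates a function `d(t)` with error `≤ K y^{2-σ}`, and
`u' = d`, then the truncation error of the explicit boundary update is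
`O(Δt (Δt + Δx^{2-σ}))`. -/
theorem stmt14 (m σ Y T : ℝ) (hm : 1 ≤ m) (hσ : σ ∈ Set.Ioo (0:ℝ) 2)
    (hY : 0 < Y) (hT : 0 < T)
    (w : ℝ → ℝ → ℝ) (hw : ∀ y ∈ Set.Icc 0 Y, ∀ t ∈ Set.Icc 0 T, 0 ≤ w y t)
    (u u' u'' d : ℝ → ℝ) (M K : ℝ) (hM : 0 ≤ M) (hK : 0 ≤ K)
    (hu : ∀ t, u t = (w 0 t) ^ (1/m))
    (hder1 : ∀ t ∈ Set.Icc (0:ℝ) T, HasDerivWithinAt u (u' t) (Set.Icc 0 T) t)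
    (hder2 : ∀ t ∈ Set.Icc (0:ℝ) T, HasDerivWithinAt u' (u'' t) (Set.Icc 0 T) t)
    (hu'' : ∀ t ∈ Set.Icc (0:ℝ) T, |u'' t| ≤ M)
    (happr : ∀ y ∈ Set.Ioc (0:ℝ) Y, ∀ t ∈ Set.Icc (0:ℝ) T,
      |nuSigma σ * (w y t - w 0 t) / y ^ σ - d t| ≤ K * y ^ (2 - σ))
    (hud : ∀ t ∈ Set.Icc (0:ℝ) T, u' t = d t) :
    ∃ C > 0, ∀ Δx ∈ Set.Ioc (0:ℝ) Y, ∀ Δt > (0:ℝ), ∀ t ∈ Set.Icc (0:ℝ) T,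
      t + Δt ≤ T →
      |nuSigma σ * (Δt / Δx ^ σ) * (w Δx t - w 0 t) + u t - u (t + Δt)|
        ≤ C * Δt * (Δt + Δx ^ (2 - σ)) := by
  refine ⟨K + M + 1, by positivity, ?_⟩
  rintro Δx ⟨hΔx0, hΔxY⟩ Δt hΔt t ht htT
  have ht' : t + Δt ∈ Set.Icc (0:ℝ) T := ⟨by linarith [ht.1], htT⟩
  -- Lipschitz bound for u' on [0,T]
  have hlip : ∀ s ∈ Set.Icc t (t + Δt), |u' s - u' t| ≤ M * Δt := by
    intro s hs
    have hs' : s ∈ Set.Icc (0:ℝ) T := ⟨by linarith [ht.1, hs.1], by linarith [hs.2]⟩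
    have := Convex.norm_image_sub_le_of_norm_hasDerivWithin_le
      (f := u') (f' := u'') (C := M) hder2 (fun x hx => by
        simpa [Real.norm_eq_abs] using hu'' x hx) (convex_Icc 0 T)
      (Set.mem_Icc.mpr ⟨ht.1, ht.2⟩) hs'
    calc |u' s - u' t| ≤ M * ‖s - t‖ := by simpa [Real.norm_eq_abs] using this
      _ ≤ M * Δt := by
          have : ‖s - t‖ ≤ Δt := by
            rw [Real.norm_eq_abs, abs_of_nonneg (by linarith [hs.1])]
            linarith [hs.2]
          exact mul_le_mul_of_nonneg_left this hM
  -- Taylor bound : |u(t+Δt) - u t - u' t * Δt| ≤ M Δt * Δt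
  have hsub : Set.Icc t (t + Δt) ⊆ Set.Icc (0:ℝ) T := fun s hs =>
    ⟨by linarith [ht.1, hs.1], by linarith [hs.2]⟩
  have htay : |u (t + Δt) - u t - u' t * Δt| ≤ M * Δt * Δt := by
    have hd : ∀ s ∈ Set.Icc t (t + Δt),
        HasDerivWithinAt (fun x => u x - u' t * x) (u' s - u' t) (Set.Icc t (t + Δt)) s := by
      intro s hs
      have h1 := ((hder1 s (hsub hs)).mono hsub).sub
        ((hasDerivWithinAt_id s (Set.Icc t (t + Δt))).const_mul (u' t))
      rw [mul_one] at h1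
      exact h1
    have := Convex.norm_image_sub_le_of_norm_hasDerivWithin_le hd
      (fun x hx => by simpa [Real.norm_eq_abs] using hlip x hx)
      (convex_Icc t (t + Δt))
      (Set.left_mem_Icc.mpr (by linarith)) (Set.right_mem_Icc.mpr (by linarith))
    have h2 : |u (t + Δt) - u' t * (t + Δt) - (u t - u' t * t)| ≤ M * Δt * ‖t + Δt - t‖ := by
      simpa [Real.norm_eq_abs] using this
    have h3 : ‖t + Δt - t‖ = Δt := by
      rw [Real.norm_eq_abs, add_sub_cancel_left, abs_of_pos hΔt]
    rw [h3] at h2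
    calc |u (t + Δt) - u t - u' t * Δt|
        = |u (t + Δt) - u' t * (t + Δt) - (u t - u' t * t)| := by ring_nf
      _ ≤ M * Δt * Δt := h2
  -- quotient bound
  have hq : |nuSigma σ * (w Δx t - w 0 t) / Δx ^ σ - d t| ≤ K * Δx ^ (2 - σ) :=
    happr Δx ⟨hΔx0, hΔxY⟩ t ht
  have hx2 : (0:ℝ) ≤ Δx ^ (2 - σ) := Real.rpow_nonneg hΔx0.le _
  have hud' := hud t ht
  have key : nuSigma σ * (Δt / Δx ^ σ) * (w Δx t - w 0 t) + u t - u (t + Δt)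
      = Δt * (nuSigma σ * (w Δx t - w 0 t) / Δx ^ σ - d t)
        - (u (t + Δt) - u t - u' t * Δt) := by
    rw [hud']; ring
  rw [key]
  calc |Δt * (nuSigma σ * (w Δx t - w 0 t) / Δx ^ σ - d t)
        - (u (t + Δt) - u t - u' t * Δt)|
      ≤ |Δt * (nuSigma σ * (w Δx t - w 0 t) / Δx ^ σ - d t)|
        + |u (t + Δt) - u t - u' t * Δt| := abs_sub _ _
    _ ≤ Δt * (K * Δx ^ (2 - σ)) + M * Δt * Δt := by
        rw [abs_mul, abs_of_pos hΔt]
        exact add_le_add (mul_le_mul_of_nonneg_left hq hΔt.le) htay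
    _ ≤ (K + M + 1) * Δt * (Δt + Δx ^ (2 - σ)) := by
        nlinarith [mul_pos hΔt hΔt, mul_nonneg hΔt.le hx2,
          mul_nonneg hK (mul_nonneg hΔt.le hΔt.le),
          mul_nonneg hM (mul_nonneg hΔt.le hx2),
          mul_nonneg hK (mul_nonneg hΔt.le hx2)]
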